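/- Let N ≥ 1 and suppose the matrix-valued function E on ℝ^N satisfies, for all indices i, j, m: ∂_m E_{ij} - ∂_j E_{im} = E_{lj} ∂_l E_{im} - E_{lm} ∂_l E_{ij} (summation over l). Then for each fixed i, j one has the identity Λ^{-1}∂_j ∂_k E_{ik} = -Λ E_{ij} + Λ^{-1}∂_k (E_{lk} ∂_l E_{ij} - E_{lj} ∂_l E_{ik}), where Λ = √(-Δ) and Λ^{-1}∂_k are Fourier multipliers with symbols |ξ| and -iξ_k/|ξ| respectively, acting on Schwartz-class (or suitably decaying smooth) functions E. -/

import Mathlib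

open MeasureTheory FourierTransform Real Complex

/-- Spatial partial derivative `∂_i f`. -/
noncomputable def pd {N : ℕ} (i : Fin N)
    (f : EuclideanSpace ℝ (Fin N) → ℝ) (x : EuclideanSpace ℝ (Fin N)) : ℝ :=
  fderiv ℝ f x (EuclideanSpace.single i 1)

/-- Fourier multiplier operator with symbol `m`, acting on a real-valued
function: `f ↦ 𝓕⁻(m · 𝓕 f)`. -/
noncomputable def fourierMul {N : ℕ} (m : EuclideanSpace ℝ (Fin N) → ℂ)
    (f : EuclideanSpace ℝ (Fin N) → ℝ) : EuclideanSpace ℝ (Fin N) → ℂ :=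
  𝓕⁻ (fun ξ => m ξ * 𝓕 (fun x => (f x : ℂ)) ξ)

/-- `Λ = √(-Δ)`, the Fourier multiplier with symbol `2π|ξ|`. -/
noncomputable def Lam {N : ℕ} (f : EuclideanSpace ℝ (Fin N) → ℝ) :
    EuclideanSpace ℝ (Fin N) → ℂ :=
  fourierMul (fun ξ => (2 * π * ‖ξ‖ : ℝ)) f

/-- `Λ⁻¹∂_k`, the Fourier multiplier with symbol `i ξ_k / |ξ|`. -/
noncomputable def invLamD {N : ℕ} (k : Fin N) (f : EuclideanSpace ℝ (Fin N) → ℝ) :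
    EuclideanSpace ℝ (Fin N) → ℂ :=
  fourierMul (fun ξ => Complex.I * (ξ k : ℝ) / (‖ξ‖ : ℝ)) f

/-- `Λ⁻¹∂_j∂_k`, the Fourier multiplier with symbol `-2π ξ_j ξ_k / |ξ|`. -/
noncomputable def invLamDD {N : ℕ} (j k : Fin N) (f : EuclideanSpace ℝ (Fin N) → ℝ) :
    EuclideanSpace ℝ (Fin N) → ℂ :=
  fourierMul (fun ξ => -(2 * π * (ξ j) * (ξ k) / ‖ξ‖ : ℝ)) f

namespace StrainAux

variable {N : ℕ}

local notation "V" => EuclideanSpace ℝ (Fin N)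

/-- Complexification of a real Schwartz map. -/
noncomputable def ofRealS (g : SchwartzMap V ℝ) : SchwartzMap V ℂ :=
  SchwartzMap.bilinLeftCLM (ContinuousLinearMap.lsmul ℝ ℝ)
    (Function.HasTemperateGrowth.const (1 : ℂ)) g

lemma ofRealS_coe (g : SchwartzMap V ℝ) :
    ⇑(ofRealS g) = fun x => ((g x : ℝ) : ℂ) := by
  funext x
  show (g x) • (1 : ℂ) = _
  simp [Complex.real_smul]

lemma integrable_coe (g : SchwartzMap V ℝ) :
    Integrable (fun x : V => ((g x : ℝ) : ℂ)) volume :=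
  g.integrable.ofReal

lemma integrable_fourier_coe (g : SchwartzMap V ℝ) :
    Integrable (fun ξ : V => 𝓕 (fun x => ((g x : ℝ) : ℂ)) ξ) volume := by
  have h := (SchwartzMap.fourierTransformCLM ℝ (ofRealS g)).integrable (μ := volume)
  simpa [SchwartzMap.fourierTransformCLM_apply, SchwartzMap.fourier_coe, ofRealS_coe] using h

/-- Fourier transform of a partial derivative. -/
lemma fourier_pd (g : SchwartzMap V ℝ) (k : Fin N) (ξ : V) :
    𝓕 (fun x => ((pd k (⇑g) x : ℝ) : ℂ)) ξ
      = (2 * (π : ℂ) * Complex.I * ((ξ k : ℝ) : ℂ)) * 𝓕 (fun x => ((g x : ℝ) : ℂ)) ξ := by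
  have hdiffg : Differentiable ℝ (⇑g) := g.differentiable
  set fc : V → ℂ := fun x => ((g x : ℝ) : ℂ) with hfc
  have hder : ∀ x : V, fderiv ℝ fc x = Complex.ofRealCLM.comp (fderiv ℝ (⇑g) x) := by
    intro x
    exact (Complex.ofRealCLM.hasFDerivAt.comp x (hdiffg x).hasFDerivAt).fderiv
  have hint : Integrable fc volume := integrable_coe g
  have hdiff : Differentiable ℝ fc :=
    fun x => ((Complex.ofRealCLM.hasFDerivAt.comp x (hdiffg x).hasFDerivAt)).differentiableAt
  have hint' : Integrable (fderiv ℝ fc) volume := by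
    have h1 : Integrable (fun x : V => fderiv ℝ (⇑g) x) volume := by
      have := (SchwartzMap.fderivCLM ℝ V ℝ g).integrable (μ := volume)
      exact this
    have h2 := (ContinuousLinearMap.compL ℝ V ℝ ℂ Complex.ofRealCLM).integrable_comp h1
    refine h2.congr ?_
    filter_upwards with x
    rw [hder x]
    rfl
  have hFT := Real.fourier_fderiv hint hdiff hint'
  have step : 𝓕 (fun x => ((pd k (⇑g) x : ℝ) : ℂ)) ξ
      = 𝓕 (fderiv ℝ fc) ξ (EuclideanSpace.single k 1) := by
    rw [Real.fourier_continuousLinearMap_apply hint']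
    congr 1
    refine congrArg (fun F : V → ℂ => 𝓕 F ξ) ?_
    funext x
    rw [hder x]
    simp [pd]
  rw [step, hFT]
  simp only [VectorFourier.fourierSMulRight_apply, ContinuousLinearMap.neg_apply,
    innerSL_apply_apply ℝ]
  have hinner : (inner ℝ ξ (EuclideanSpace.single k (1:ℝ)) : ℝ) = ξ k := by
    simp [EuclideanSpace.inner_single_right]
  rw [hinner]
  simp only [smul_eq_mul, Complex.real_smul]
  push_cast
  ring

end StrainAux

namespace StrainAux

variable {N : ℕ}
local notation "V" => EuclideanSpace ℝ (Fin N)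

lemma abs_coord_le_norm (ξ : V) (k : Fin N) : |ξ k| ≤ ‖ξ‖ := by
  have h := abs_real_inner_le_norm (EuclideanSpace.single k (1:ℝ)) ξ
  simpa [EuclideanSpace.inner_single_left] using h

lemma symbol_meas (k : Fin N) :
    Measurable (fun ξ : V => Complex.I * ((ξ k : ℝ) : ℂ) / ((‖ξ‖ : ℝ) : ℂ)) := by
  apply Measurable.div
  · exact measurable_const.mul (Complex.measurable_ofReal.comp
      ((EuclideanSpace.proj k : EuclideanSpace ℝ (Fin N) →L[ℝ] ℝ).continuous.measurable))
  · exact Complex.measurable_ofReal.comp measurable_norm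

lemma symbol_bdd (k : Fin N) (ξ : V) :
    ‖Complex.I * ((ξ k : ℝ) : ℂ) / ((‖ξ‖ : ℝ) : ℂ)‖ ≤ 1 := by
  rw [norm_div, norm_mul]
  simp only [Complex.norm_I, one_mul, Complex.norm_real, Real.norm_eq_abs, abs_norm]
  exact div_le_one_of_le₀ (abs_coord_le_norm ξ k) (norm_nonneg ξ)

lemma integrable_symbol_mul (k : Fin N) (g : SchwartzMap V ℝ) :
    Integrable (fun ξ : V => (Complex.I * ((ξ k : ℝ) : ℂ) / ((‖ξ‖ : ℝ) : ℂ))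
      * 𝓕 (fun x => ((g x : ℝ) : ℂ)) ξ) volume :=
  (integrable_fourier_coe g).bdd_mul (symbol_meas k).aestronglyMeasurable
    (ae_of_all _ (symbol_bdd k))

lemma fourier_coe_sub (a b : SchwartzMap V ℝ) (ξ : V) :
    𝓕 (fun x : V => ((a x - b x : ℝ) : ℂ)) ξ
      = 𝓕 (fun x => ((a x : ℝ) : ℂ)) ξ - 𝓕 (fun x => ((b x : ℝ) : ℂ)) ξ := by
  simp only [Real.fourier_eq]
  rw [← integral_sub ((Real.fourierIntegral_convergent_iff ξ).2 (integrable_coe a))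
    ((Real.fourierIntegral_convergent_iff ξ).2 (integrable_coe b))]
  congr 1
  funext v
  push_cast
  rw [smul_sub]

lemma finv_sub (F G : V → ℂ) (hF : Integrable F volume) (hG : Integrable G volume) (x : V) :
    𝓕⁻ (fun ξ => F ξ - G ξ) x = 𝓕⁻ F x - 𝓕⁻ G x := by
  simp only [Real.fourierInv_eq_fourier_neg, Real.fourier_eq]
  rw [← integral_sub ((Real.fourierIntegral_convergent_iff _).2 hF)
    ((Real.fourierIntegral_convergent_iff _).2 hG)]
  simp [smul_sub]

lemma finv_sum (F : Fin N → V → ℂ) (hF : ∀ k, Integrable (F k) volume) (x : V) :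
    𝓕⁻ (fun ξ => ∑ k, F k ξ) x = ∑ k, 𝓕⁻ (F k) x := by
  simp only [Real.fourierInv_eq_fourier_neg, Real.fourier_eq]
  rw [← integral_finset_sum _ (fun k _ => (Real.fourierIntegral_convergent_iff _).2 (hF k))]
  simp [Finset.smul_sum]

lemma finv_neg (F : V → ℂ) (x : V) :
    𝓕⁻ (fun ξ => -(F ξ)) x = -(𝓕⁻ F x) := by
  simp only [Real.fourierInv_eq_fourier_neg, Real.fourier_eq]
  rw [← integral_neg]
  simp

lemma key2 (g : SchwartzMap V ℝ) (j k : Fin N) (ξ : V) :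
    (Complex.I * ((ξ k : ℝ) : ℂ) / ((‖ξ‖ : ℝ) : ℂ)) * 𝓕 (fun x => ((pd j (⇑g) x : ℝ) : ℂ)) ξ
      = -(((2 * π * (ξ j) * (ξ k) / ‖ξ‖ : ℝ)) : ℂ) * 𝓕 (fun x => ((g x : ℝ) : ℂ)) ξ := by
  rw [fourier_pd]
  push_cast
  set F := 𝓕 (fun x => ((g x : ℝ) : ℂ)) ξ
  rw [div_eq_mul_inv, div_eq_mul_inv]
  linear_combination (2 * (π:ℂ) * ((ξ j : ℝ):ℂ) * ((ξ k : ℝ):ℂ) * (((‖ξ‖ : ℝ):ℂ))⁻¹ * F) *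
    Complex.I_sq

lemma sum_sq_coord (ξ : V) : ∑ k, (ξ k) ^ 2 = ‖ξ‖ ^ 2 := by
  have h := real_inner_self_eq_norm_sq ξ
  rw [PiLp.inner_apply] at h
  simpa [sq] using h

lemma key3 (g : SchwartzMap V ℝ) (ξ : V) :
    ∑ k, (Complex.I * ((ξ k : ℝ) : ℂ) / ((‖ξ‖ : ℝ) : ℂ))
        * 𝓕 (fun x => ((pd k (⇑g) x : ℝ) : ℂ)) ξ
      = -(((2 * π * ‖ξ‖ : ℝ) : ℂ) * 𝓕 (fun x => ((g x : ℝ) : ℂ)) ξ) := by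
  rcases eq_or_ne ξ 0 with rfl | hξ
  · simp
  · have hn : ((‖ξ‖ : ℝ) : ℂ) ≠ 0 := by
      exact_mod_cast norm_ne_zero_iff.2 hξ
    set F := 𝓕 (fun x => ((g x : ℝ) : ℂ)) ξ with hF
    have hterm : ∀ k, (Complex.I * ((ξ k : ℝ) : ℂ) / ((‖ξ‖ : ℝ) : ℂ))
        * 𝓕 (fun x => ((pd k (⇑g) x : ℝ) : ℂ)) ξ
        = ((ξ k : ℝ) : ℂ) ^ 2 * (-(2 * (π:ℂ) / ((‖ξ‖ : ℝ) : ℂ) * F)) := by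
      intro k
      rw [fourier_pd, ← hF]
      rw [div_eq_mul_inv, div_eq_mul_inv]
      linear_combination (2 * (π:ℂ) * ((ξ k : ℝ):ℂ)^2 * (((‖ξ‖ : ℝ):ℂ))⁻¹ * F) * Complex.I_sq
    rw [Finset.sum_congr rfl (fun k _ => hterm k), ← Finset.sum_mul]
    have hs : (∑ k, ((ξ k : ℝ) : ℂ) ^ 2) = ((‖ξ‖ : ℝ) : ℂ) ^ 2 := by
      exact_mod_cast congrArg Complex.ofReal (sum_sq_coord ξ)
    rw [hs]
    push_cast
    field_simp

end StrainAux

/-- If the strain tensor `E` satisfies the compatibility constraint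
`∂_m E_{ij} - ∂_j E_{im} = E_{lj} ∂_l E_{im} - E_{lm} ∂_l E_{ij}`, then
`Λ⁻¹∂_j ∂_k E_{ik} = -Λ E_{ij} + Λ⁻¹∂_k (E_{lk} ∂_l E_{ij} - E_{lj} ∂_l E_{ik})`
(summation over repeated indices `k`, `l`). -/
theorem strain_compatibility_identity (N : ℕ) (hN : 1 ≤ N)
    (E : Fin N → Fin N → SchwartzMap (EuclideanSpace ℝ (Fin N)) ℝ)
    (hcomp : ∀ (i j m : Fin N) (x : EuclideanSpace ℝ (Fin N)),
      pd m (⇑(E i j)) x - pd j (⇑(E i m)) x =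
        ∑ l, (E l j x * pd l (⇑(E i m)) x - E l m x * pd l (⇑(E i j)) x))
    (i j : Fin N) (x : EuclideanSpace ℝ (Fin N)) :
    ∑ k, invLamDD j k (⇑(E i k)) x =
      -(Lam (⇑(E i j)) x) +
        ∑ k, invLamD k
          (fun y => ∑ l, (E l k y * pd l (⇑(E i j)) y - E l j y * pd l (⇑(E i k)) y)) x := by
  classical
  have hfun : ∀ (k : Fin N) (y : EuclideanSpace ℝ (Fin N)),
      (∑ l, (E l k y * pd l (⇑(E i j)) y - E l j y * pd l (⇑(E i k)) y))
        = pd j (⇑(E i k)) y - pd k (⇑(E i j)) y := fun k y => (hcomp i k j y).symm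
  set a : Fin N → SchwartzMap (EuclideanSpace ℝ (Fin N)) ℝ :=
    fun k => LineDeriv.lineDerivOp (EuclideanSpace.single j (1:ℝ)) (E i k) with ha
  set b : Fin N → SchwartzMap (EuclideanSpace ℝ (Fin N)) ℝ :=
    fun k => LineDeriv.lineDerivOp (EuclideanSpace.single k (1:ℝ)) (E i j) with hb
  have hacoe : ∀ k y, a k y = pd j (⇑(E i k)) y := fun k y => rfl
  have hbcoe : ∀ k y, b k y = pd k (⇑(E i j)) y := fun k y => rfl
  simp only [hfun, invLamD, invLamDD, Lam, fourierMul]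
  have hks : ∀ k : Fin N,
      𝓕⁻ (fun ξ => Complex.I * ((ξ k : ℝ) : ℂ) / ((‖ξ‖ : ℝ) : ℂ) *
          𝓕 (fun y => ((pd j (⇑(E i k)) y - pd k (⇑(E i j)) y : ℝ) : ℂ)) ξ) x
        = 𝓕⁻ (fun ξ => -(((2 * π * (ξ j) * (ξ k) / ‖ξ‖ : ℝ)) : ℂ) *
              𝓕 (fun y => ((E i k y : ℝ) : ℂ)) ξ) x
          - 𝓕⁻ (fun ξ => Complex.I * ((ξ k : ℝ) : ℂ) / ((‖ξ‖ : ℝ) : ℂ) *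
              𝓕 (fun y => ((b k y : ℝ) : ℂ)) ξ) x := by
    intro k
    have e1 : (fun ξ : EuclideanSpace ℝ (Fin N) =>
        Complex.I * ((ξ k : ℝ) : ℂ) / ((‖ξ‖ : ℝ) : ℂ) *
          𝓕 (fun y => ((pd j (⇑(E i k)) y - pd k (⇑(E i j)) y : ℝ) : ℂ)) ξ)
        = fun ξ => Complex.I * ((ξ k : ℝ) : ℂ) / ((‖ξ‖ : ℝ) : ℂ) *
              𝓕 (fun y => ((a k y : ℝ) : ℂ)) ξ
            - Complex.I * ((ξ k : ℝ) : ℂ) / ((‖ξ‖ : ℝ) : ℂ) *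
              𝓕 (fun y => ((b k y : ℝ) : ℂ)) ξ := by
      funext ξ
      have : (fun y => ((pd j (⇑(E i k)) y - pd k (⇑(E i j)) y : ℝ) : ℂ))
          = fun y => ((a k y - b k y : ℝ) : ℂ) := by
        funext y
        rw [hacoe, hbcoe]
      rw [this, StrainAux.fourier_coe_sub, mul_sub]
    rw [e1, StrainAux.finv_sub _ _ (StrainAux.integrable_symbol_mul k (a k))
      (StrainAux.integrable_symbol_mul k (b k)) x]
    congr 2
    refine congrArg (fun F : EuclideanSpace ℝ (Fin N) → ℂ => 𝓕⁻ F x) ?_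
    funext ξ
    have h2 := StrainAux.key2 (E i k) j k ξ
    have : (fun y => ((a k y : ℝ) : ℂ)) = fun y => ((pd j (⇑(E i k)) y : ℝ) : ℂ) := by
      funext y; rw [hacoe]
    rw [this, h2]
  simp only [hks]
  rw [Finset.sum_sub_distrib]
  have hsum2 : ∑ k, 𝓕⁻ (fun ξ => Complex.I * ((ξ k : ℝ) : ℂ) / ((‖ξ‖ : ℝ) : ℂ) *
        𝓕 (fun y => ((b k y : ℝ) : ℂ)) ξ) x
      = -(𝓕⁻ (fun ξ => (((2 : ℝ) * π * ‖ξ‖ : ℝ) : ℂ) *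
          𝓕 (fun y => ((E i j y : ℝ) : ℂ)) ξ) x) := by
    rw [← StrainAux.finv_sum _ (fun k => StrainAux.integrable_symbol_mul k (b k)) x,
      ← StrainAux.finv_neg]
    congr 1
    refine congrArg (fun F : EuclideanSpace ℝ (Fin N) → ℂ => 𝓕⁻ F x) ?_
    funext ξ
    have h3 := StrainAux.key3 (E i j) ξ
    have : ∀ k : Fin N, (fun y => ((b k y : ℝ) : ℂ))
        = fun y => ((pd k (⇑(E i j)) y : ℝ) : ℂ) := by
      intro k; funext y; rw [hbcoe]
    simp only [this]
    rw [h3]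
  rw [hsum2]
  ring
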